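/- Let (Ω, 𝒜, μ) be a finite measure space and F : ℝ^m ⇉ ℝ^n a set-valued map. Let (x_n) and (y_n) be sequences of measurable functions such that: x_n converges μ-almost everywhere to a function x : Ω → ℝ^m; y_n converges weakly in L¹(μ; ℝ^n) to a function y; and y_n(t) ∈ F(x_n(t)) for μ-almost all t ∈ Ω, for every n. Then for μ-almost all t ∈ Ω it holds y(t) ∈ (conv^∞ F)(x(t)). -/

import Mathlib

open MeasureTheory Filter

/-- The (Painlevé–Kuratowski) outer limit of a sequence of sets: the set of all limits of
convergent subsequences `y_j ∈ A_{k_j}`. -/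
def outerLimit {X : Type*} [TopologicalSpace X] (A : ℕ → Set X) : Set X :=
  {y | ∃ (φ : ℕ → ℕ) (z : ℕ → X), StrictMono φ ∧ (∀ j, z j ∈ A (φ j)) ∧
    Tendsto z atTop (nhds y)}

/-- `(conv^∞ F)(x) := limsup_{k → ∞} conv (F (x + B_{1/k}(0)))` for a set-valued map `F`. -/
def convInf {m nn : ℕ} (F : EuclideanSpace ℝ (Fin m) → Set (EuclideanSpace ℝ (Fin nn)))
    (x : EuclideanSpace ℝ (Fin m)) : Set (EuclideanSpace ℝ (Fin nn)) :=
  outerLimit (fun k => convexHull ℝ (⋃ x' ∈ Metric.ball x (1 / (k + 1) : ℝ), F x'))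

section AuxBlocks

open Metric EMetric Set TopologicalSpace ENNReal

set_option linter.unusedSectionVars false

lemma measurable_sInf_nat {α : Type*} [MeasurableSpace α] {Q : ℕ → α → Prop}
    (h : ∀ i, MeasurableSet {a | Q i a}) : Measurable fun a => sInf {i | Q i a} := by
  apply measurable_to_countable'
  intro i
  have hiff : ∀ a, (sInf {i' | Q i' a} = i) ↔
      ((Q i a ∧ ∀ j < i, ¬ Q j a) ∨ (i = 0 ∧ ∀ j, ¬ Q j a)) := by
    intro a
    constructor
    · intro hs
      by_cases hne : ∃ j, Q j a
      · left
        constructor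
        · have := Nat.sInf_mem hne
          exact hs ▸ this
        · intro j hj
          exact Nat.notMem_of_lt_sInf (hs ▸ hj)
      · right
        push_neg at hne
        have hempty : {i' | Q i' a} = ∅ := by
          ext j; simp [hne j]
        rw [hempty, Nat.sInf_empty] at hs
        exact ⟨hs.symm, hne⟩
    · rintro (⟨h1, h2⟩ | ⟨rfl, hall⟩)
      · refine le_antisymm (Nat.sInf_le h1) ?_
        by_contra hlt
        push_neg at hlt
        exact h2 _ hlt (Nat.sInf_mem (⟨i, h1⟩ : Set.Nonempty {i' | Q i' a}))
      · have hempty : {i' | Q i' a} = ∅ := by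
          ext j; simp [hall j]
        rw [hempty, Nat.sInf_empty]
  have : (fun a => sInf {i' | Q i' a}) ⁻¹' {i} =
      ({a | Q i a} ∩ ⋂ j ∈ Finset.range i, {a | Q j a}ᶜ) ∪
      (if i = 0 then ⋂ j : ℕ, {a | Q j a}ᶜ else ∅) := by
    ext a
    simp only [Set.mem_preimage, Set.mem_singleton_iff, hiff a, Set.mem_union, Set.mem_inter_iff,
      Set.mem_iInter, Finset.mem_range, Set.mem_compl_iff, Set.mem_setOf_eq]
    constructor
    · rintro (⟨h1, h2⟩ | ⟨rfl, hall⟩)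
      · exact Or.inl ⟨h1, h2⟩
      · right; simp [hall]
    · rintro (⟨h1, h2⟩ | hright)
      · exact Or.inl ⟨h1, h2⟩
      · right
        by_cases hi : i = 0
        · simp only [hi, if_true, Set.mem_iInter, Set.mem_compl_iff, Set.mem_setOf_eq] at hright
          exact ⟨hi, hright⟩
        · simp [hi] at hright
  rw [this]
  refine MeasurableSet.union (MeasurableSet.inter (h i) ?_) ?_
  · exact MeasurableSet.biInter (Finset.range i).countable_toSet fun j _ => (h j).compl
  · split
    · exact MeasurableSet.iInter fun j => (h j).compl
    · exact MeasurableSet.empty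


section Blocks

variable {X Y : Type*} [NormedAddCommGroup X] [NormedAddCommGroup Y] [InnerProductSpace ℝ Y]

/-- convex hull of values of `F` over a ball. -/
def gSet (F : X → Set Y) (r : ℝ) (x : X) : Set Y :=
  convexHull ℝ (⋃ x' ∈ Metric.ball x r, F x')

lemma usc_infEdist_gSet (F : X → Set Y) (r : ℝ) :
    UpperSemicontinuous (fun p : X × Y => infEdist p.2 (gSet F r p.1)) := by
  intro ⟨x₀, v₀⟩ c hc
  simp only at hc
  obtain ⟨w, hwmem, hww⟩ := infEdist_lt_iff.mp hc
  rw [gSet, convexHull_eq] at hwmem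
  obtain ⟨ι, t, wt, z, hw₀, hw₁, hz, hcm⟩ := hwmem
  have hch : ∀ i : ι, ∃ xx : X, i ∈ t → (xx ∈ Metric.ball x₀ r ∧ z i ∈ F xx) := by
    intro i
    by_cases hi : i ∈ t
    · obtain ⟨xx, hxx, hzz⟩ := Set.mem_iUnion₂.mp (hz i hi)
      exact ⟨xx, fun _ => ⟨hxx, hzz⟩⟩
    · exact ⟨x₀, fun h => absurd h hi⟩
  choose x' hx' using hch
  set V : Set X := ⋂ i ∈ t, Metric.ball (x' i) r with hVdef
  have hVopen : IsOpen V := isOpen_biInter_finset fun i _ => Metric.isOpen_ball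
  have hx₀V : x₀ ∈ V := by
    refine Set.mem_iInter₂.mpr fun i hi => ?_
    rw [Metric.mem_ball, dist_comm]
    exact (hx' i hi).1
  have hkey : ∀ x ∈ V, w ∈ gSet F r x := by
    intro x hxV
    rw [gSet]
    rw [← hcm]
    refine Finset.centerMass_mem_convexHull t hw₀ (by rw [hw₁]; norm_num) ?_
    intro i hi
    refine Set.mem_iUnion₂.mpr ⟨x' i, ?_, (hx' i hi).2⟩
    have := Set.mem_iInter₂.mp hxV i hi
    rwa [Metric.mem_ball, dist_comm] at this
  -- neighborhood in the product
  have hmem : (V ×ˢ {v | edist v w < c}) ∈ nhds (x₀, v₀) := by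
    refine prod_mem_nhds (hVopen.mem_nhds hx₀V) ?_
    have : IsOpen {v : Y | edist v w < c} := isOpen_lt (continuous_edist.comp (Continuous.prodMk continuous_id continuous_const)) continuous_const
    exact this.mem_nhds hww
  filter_upwards [hmem] with p hp
  exact lt_of_le_of_lt (infEdist_le_edist_of_mem (hkey p.1 hp.1)) hp.2


noncomputable def ddFn (F : X → Set Y) (r : ℝ) (p : X × Y) : ℝ≥0∞ :=
  infEdist p.2 (gSet F r p.1)

variable [SecondCountableTopology Y] [Nonempty Y] [CompleteSpace Y]

noncomputable def wseq (Y : Type*) [TopologicalSpace Y] [SeparableSpace Y] [Nonempty Y] : ℕ → Y :=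
  denseSeq Y

def Qpred (F : X → Set Y) (r : ℝ) (j i : ℕ) (p : X × Y) : Prop :=
  infEdist (wseq Y i) (gSet F r p.1) < ENNReal.ofReal (1 / (j + 1)) ∧
  edist p.2 (wseq Y i) < ddFn F r p + ENNReal.ofReal (1 / (j + 1))

noncomputable def gseq (F : X → Set Y) (r : ℝ) (j : ℕ) (p : X × Y) : Y :=
  if ddFn F r p = ⊤ then 0 else wseq Y (sInf {i | Qpred F r j i p})

lemma ddFn_eq_top_iff {F : X → Set Y} {r : ℝ} {p : X × Y} :
    ddFn F r p = ⊤ ↔ gSet F r p.1 = ∅ := by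
  constructor
  · intro h
    by_contra hne
    obtain ⟨w, hw⟩ := Set.nonempty_iff_ne_empty.mpr hne
    exact absurd h (ne_top_of_le_ne_top (edist_ne_top _ _) (infEdist_le_edist_of_mem hw))
  · intro h; rw [ddFn, h]; exact infEdist_empty

lemma exists_Qpred {F : X → Set Y} {r : ℝ} {p : X × Y} (hne : (gSet F r p.1).Nonempty)
    (j : ℕ) : ∃ i, Qpred F r j i p := by
  have hjpos : (0:ℝ) < 1 / (j + 1) := by positivity
  have hdd : ddFn F r p ≠ ⊤ := by
    rw [ne_eq, ddFn_eq_top_iff]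
    exact hne.ne_empty
  have hhalf : (0:ℝ≥0∞) < ENNReal.ofReal (1 / (j + 1) / 2) := by
    simp [ENNReal.ofReal_pos]; positivity
  have hlt : ddFn F r p < ddFn F r p + ENNReal.ofReal (1 / (j + 1) / 2) :=
    ENNReal.lt_add_right hdd hhalf.ne'
  obtain ⟨u, hu, huedist⟩ := infEdist_lt_iff.mp hlt
  obtain ⟨i, hi⟩ := Metric.denseRange_iff.mp (denseRange_denseSeq Y) u (1 / (j + 1) / 2)
    (by positivity)
  refine ⟨i, ?_, ?_⟩
  · calc infEdist (wseq Y i) (gSet F r p.1) ≤ edist (wseq Y i) u := infEdist_le_edist_of_mem hu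
    _ = ENNReal.ofReal (dist u (wseq Y i)) := by rw [edist_dist, dist_comm]
    _ < ENNReal.ofReal (1 / (j + 1)) := by
        apply ENNReal.ofReal_lt_ofReal_iff_of_nonneg dist_nonneg |>.mpr
        calc dist u (wseq Y i) < 1 / (j + 1) / 2 := hi
        _ < 1 / (j + 1) := by linarith
  · calc edist p.2 (wseq Y i) ≤ edist p.2 u + edist u (wseq Y i) := edist_triangle _ _ _
    _ < (ddFn F r p + ENNReal.ofReal (1 / (j + 1) / 2)) + ENNReal.ofReal (1 / (j + 1) / 2) := by
        apply ENNReal.add_lt_add huedist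
        rw [edist_dist]
        exact ENNReal.ofReal_lt_ofReal_iff_of_nonneg dist_nonneg |>.mpr hi
    _ = ddFn F r p + (ENNReal.ofReal (1 / (j + 1) / 2) + ENNReal.ofReal (1 / (j + 1) / 2)) := by
        ring
    _ = ddFn F r p + ENNReal.ofReal (1 / (j + 1)) := by
        rw [← ENNReal.ofReal_add (by positivity) (by positivity)]
        norm_num

lemma gseq_spec {F : X → Set Y} {r : ℝ} {p : X × Y} (hne : (gSet F r p.1).Nonempty) (j : ℕ) :
    Qpred F r j (sInf {i | Qpred F r j i p}) p ∧
      gseq F r j p = wseq Y (sInf {i | Qpred F r j i p}) := by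
  have hdd : ddFn F r p ≠ ⊤ := by rw [ne_eq, ddFn_eq_top_iff]; exact hne.ne_empty
  exact ⟨Nat.sInf_mem (exists_Qpred hne j), by rw [gseq, if_neg hdd]⟩


lemma gseq_tendsto {F : X → Set Y} {r : ℝ} {p : X × Y} (hne : (gSet F r p.1).Nonempty) :
    ∃ P ∈ closure (gSet F r p.1),
      (‖p.2 - P‖ = ⨅ w : closure (gSet F r p.1), ‖p.2 - w‖) ∧
      Tendsto (fun j => gseq F r j p) atTop (nhds P) := by
  classical
  set K := closure (gSet F r p.1) with hK
  have hKne : K.Nonempty := hne.closure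
  have hKconv : Convex ℝ K := (convex_convexHull ℝ _).closure
  have hKcomp : IsComplete K := isClosed_closure.isComplete
  obtain ⟨P, hPK, hPmin⟩ := exists_norm_eq_iInf_of_complete_convex hKne hKcomp hKconv p.2
  set vv := p.2 with hvv
  set d := infDist vv K with hd
  have hdnonneg : 0 ≤ d := infDist_nonneg
  have hinf_eq : (⨅ w : K, ‖vv - w‖) = d := by
    rw [hd, infDist_eq_iInf]
    congr 1
    funext w
    rw [dist_eq_norm]
  have hPd : ‖vv - P‖ = d := by rw [hPmin, hinf_eq]
  have hddne : ddFn F r p ≠ ⊤ := by rw [ne_eq, ddFn_eq_top_iff]; exact hne.ne_empty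
  have hddval : ddFn F r p = ENNReal.ofReal d := by
    have : ddFn F r p = infEDist vv K := by rw [ddFn, hK, infEdist, infEDist_closure]
    rw [this]
    rw [hd, infDist]
    rw [ENNReal.ofReal_toReal]
    rw [← this]; exact hddne
  -- extract approximants
  have hQ : ∀ j : ℕ, Qpred F r j (sInf {i | Qpred F r j i p}) p := fun j => (gseq_spec hne j).1
  have hg : ∀ j : ℕ, gseq F r j p = wseq Y (sInf {i | Qpred F r j i p}) :=
    fun j => (gseq_spec hne j).2
  have hchoice : ∀ j : ℕ, ∃ u ∈ gSet F r p.1,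
      dist (gseq F r j p) u < 1 / (j + 1) ∧ dist vv (gseq F r j p) < d + 1 / (j + 1) := by
    intro j
    have hQ1 := (hQ j).1
    have hQ2 := (hQ j).2
    rw [← hg j] at hQ1 hQ2
    obtain ⟨u, hu, hult⟩ := infEdist_lt_iff.mp hQ1
    have hjpos : (0:ℝ) < 1 / (j + 1) := by positivity
    refine ⟨u, hu, ?_, ?_⟩
    · rw [edist_dist] at hult
      exact (ENNReal.ofReal_lt_ofReal_iff hjpos).mp hult
    · rw [hddval, ← ENNReal.ofReal_add hdnonneg hjpos.le, edist_dist] at hQ2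
      exact (ENNReal.ofReal_lt_ofReal_iff (by positivity)).mp hQ2
  choose u humem hud hvd using hchoice
  -- quantitative bound
  have hbound : ∀ j : ℕ, dist (gseq F r j p) P ≤
      1 / (j + 1) + Real.sqrt (2 * (d + 2 * (1 / (j + 1)))^2 - 2 * d^2) := by
    intro j
    have huK : u j ∈ K := subset_closure (humem j)
    have hmid : (1/2 : ℝ) • (u j) + (1/2 : ℝ) • P ∈ K :=
      hKconv huK hPK (by norm_num) (by norm_num) (by norm_num)
    set mid := (1/2 : ℝ) • (u j) + (1/2 : ℝ) • P with hmiddef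
    have hmd : d ≤ ‖vv - mid‖ := by
      rw [← dist_eq_norm]
      exact infDist_le_dist_of_mem hmid
    have e1 : (vv - u j) + (vv - P) = (2:ℝ) • (vv - mid) := by
      rw [hmiddef]; module
    have e2 : (vv - u j) - (vv - P) = P - u j := by abel
    have hpar := parallelogram_law_with_norm ℝ (vv - u j) (vv - P)
    rw [e1, e2, norm_smul] at hpar
    simp only [Real.norm_ofNat] at hpar
    have h1 : ‖vv - u j‖ ≤ d + 2 * (1 / (j + 1)) := by
      have : dist vv (u j) ≤ dist vv (gseq F r j p) + dist (gseq F r j p) (u j) :=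
        dist_triangle _ _ _
      rw [dist_eq_norm] at this
      have := this.trans (by linarith [hud j, hvd j] : dist vv (gseq F r j p) + dist (gseq F r j p) (u j) ≤ d + 2 * (1 / (j+1)))
      exact this
    have hsq : ‖P - u j‖^2 ≤ 2 * (d + 2 * (1 / (j + 1)))^2 - 2 * d^2 := by
      nlinarith [norm_nonneg (vv - u j), norm_nonneg (P - u j), norm_nonneg (vv - mid),
        sq_nonneg (‖vv - mid‖ - d), hdnonneg]
    have hPu : ‖P - u j‖ ≤ Real.sqrt (2 * (d + 2 * (1 / (j + 1)))^2 - 2 * d^2) := by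
      rw [← Real.sqrt_sq (norm_nonneg (P - u j))]
      exact Real.sqrt_le_sqrt hsq
    calc dist (gseq F r j p) P ≤ dist (gseq F r j p) (u j) + dist (u j) P := dist_triangle _ _ _
    _ ≤ 1 / (j + 1) + Real.sqrt (2 * (d + 2 * (1 / (j + 1)))^2 - 2 * d^2) := by
        refine add_le_add (hud j).le ?_
        rw [dist_eq_norm, ← norm_sub_rev]
        exact hPu
  refine ⟨P, hPK, hPmin, ?_⟩
  rw [tendsto_iff_dist_tendsto_zero]
  have hRHS : Tendsto (fun j : ℕ => 1 / ((j:ℝ) + 1) +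
      Real.sqrt (2 * (d + 2 * (1 / (j + 1)))^2 - 2 * d^2)) atTop (nhds 0) := by
    have hcont : Continuous fun e : ℝ => e + Real.sqrt (2 * (d + 2 * e)^2 - 2 * d^2) := by
      fun_prop
    have := (hcont.tendsto 0).comp tendsto_one_div_add_atTop_nhds_zero_nat
    have h00 : (0:ℝ) + Real.sqrt (2 * (d + 2 * 0)^2 - 2 * d^2) = 0 := by
      have hz : 2 * (d + 2 * (0:ℝ))^2 - 2 * d^2 = 0 := by ring
      rw [hz, Real.sqrt_zero]; ring
    rw [h00] at this
    exact this
  exact squeeze_zero (fun j => dist_nonneg) hbound hRHS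


noncomputable def projFn (F : X → Set Y) (r : ℝ) (p : X × Y) : Y :=
  limUnder atTop (fun j => gseq F r j p)

lemma tendsto_gseq_projFn (F : X → Set Y) (r : ℝ) (p : X × Y) :
    Tendsto (fun j => gseq F r j p) atTop (nhds (projFn F r p)) := by
  apply tendsto_nhds_limUnder
  by_cases hne : (gSet F r p.1).Nonempty
  · obtain ⟨P, _, _, h⟩ := gseq_tendsto hne
    exact ⟨P, h⟩
  · have hdd : ddFn F r p = ⊤ := ddFn_eq_top_iff.mpr (not_nonempty_iff_eq_empty.mp hne)
    refine ⟨0, ?_⟩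
    have : (fun j => gseq F r j p) = fun _ => (0 : Y) := by
      funext j; rw [gseq, if_pos hdd]
    rw [this]
    exact tendsto_const_nhds

lemma projFn_spec {F : X → Set Y} {r : ℝ} {p : X × Y} (hne : (gSet F r p.1).Nonempty) :
    projFn F r p ∈ closure (gSet F r p.1) ∧
    ∀ w ∈ closure (gSet F r p.1),
      (inner ℝ (p.2 - projFn F r p) (w - projFn F r p) : ℝ) ≤ 0 := by
  obtain ⟨P, hPK, hPmin, hPt⟩ := gseq_tendsto hne
  have heq : projFn F r p = P := hPt.limUnder_eq
  rw [heq]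
  refine ⟨hPK, ?_⟩
  exact (norm_eq_iInf_iff_real_inner_le_zero ((convex_convexHull ℝ _).closure) hPK).mp hPmin


variable [MeasurableSpace X] [BorelSpace X] [SecondCountableTopology X]
  [MeasurableSpace Y] [BorelSpace Y]

lemma measurable_ddFn (F : X → Set Y) (r : ℝ) : Measurable (ddFn F r) :=
  (usc_infEdist_gSet F r).measurable

lemma measurable_gseq (F : X → Set Y) (r : ℝ) (j : ℕ) : Measurable (gseq F r j) := by
  have hQm : ∀ i, MeasurableSet {p : X × Y | Qpred F r j i p} := by
    intro i
    have m1 : Measurable fun p : X × Y => infEdist (wseq Y i) (gSet F r p.1) :=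
      (measurable_ddFn F r).comp (measurable_fst.prodMk measurable_const)
    have m2 : Measurable fun p : X × Y => edist p.2 (wseq Y i) :=
      measurable_snd.edist measurable_const
    have h1 : MeasurableSet {p : X × Y |
        infEdist (wseq Y i) (gSet F r p.1) < ENNReal.ofReal (1 / (j + 1))} :=
      measurableSet_lt m1 measurable_const
    have h2 : MeasurableSet {p : X × Y |
        edist p.2 (wseq Y i) < ddFn F r p + ENNReal.ofReal (1 / (j + 1))} :=
      measurableSet_lt m2 ((measurable_ddFn F r).add measurable_const)
    exact h1.inter h2
  have hset : MeasurableSet {p : X × Y | ddFn F r p = ⊤} :=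
    (measurable_ddFn F r) (measurableSet_singleton ⊤)
  exact Measurable.ite hset measurable_const
    (measurable_from_top.comp (measurable_sInf_nat hQm))

lemma measurable_projFn (F : X → Set Y) (r : ℝ) : Measurable (projFn F r) :=
  measurable_of_tendsto_metrizable (measurable_gseq F r) (by
    rw [tendsto_pi_nhds]
    exact fun p => tendsto_gseq_projFn F r p)


end Blocks

theorem weak_limit_in_convInf {Ω : Type*} [MeasurableSpace Ω] (μ : Measure Ω)
    [IsFiniteMeasure μ] {m nn : ℕ}
    (F : EuclideanSpace ℝ (Fin m) → Set (EuclideanSpace ℝ (Fin nn)))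
    (x : Ω → EuclideanSpace ℝ (Fin m)) (xs : ℕ → Ω → EuclideanSpace ℝ (Fin m))
    (y : Ω → EuclideanSpace ℝ (Fin nn)) (ys : ℕ → Ω → EuclideanSpace ℝ (Fin nn))
    (hxsmeas : ∀ k, Measurable (xs k)) (hysmeas : ∀ k, Measurable (ys k))
    (hymeas : Measurable y)
    (hysint : ∀ k, Integrable (ys k) μ) (hyint : Integrable y μ)
    (hxconv : ∀ᵐ t ∂μ, Tendsto (fun k => xs k t) atTop (nhds (x t)))
    (hweak : ∀ b : Ω → EuclideanSpace ℝ (Fin nn), Measurable b →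
      (∃ C : ℝ, ∀ t, ‖b t‖ ≤ C) →
      Tendsto (fun k => ∫ t, (inner ℝ (ys k t) (b t) : ℝ) ∂μ) atTop
        (nhds (∫ t, (inner ℝ (y t) (b t) : ℝ) ∂μ)))
    (hmem : ∀ k, ∀ᵐ t ∂μ, ys k t ∈ F (xs k t)) :
    ∀ᵐ t ∂μ, y t ∈ convInf F (x t) := by
  classical
  set r : ℕ → ℝ := fun k => 1 / ((k : ℝ) + 1) with hrdef
  have hrpos : ∀ k, 0 < r k := fun k => by positivity
  -- measurable version of x
  have hx : AEMeasurable x μ :=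
    aemeasurable_of_tendsto_metrizable_ae atTop (fun n => (hxsmeas n).aemeasurable) hxconv
  set xt := hx.mk x with hxtdef
  have hxt : Measurable xt := hx.measurable_mk
  have hxx : x =ᵐ[μ] xt := hx.ae_eq_mk
  -- good set
  have hGoodae : ∀ᵐ t ∂μ, (∀ n, ys n t ∈ F (xs n t)) ∧
      Tendsto (fun n => xs n t) atTop (nhds (x t)) ∧ x t = xt t :=
    ((ae_all_iff.mpr hmem).and (hxconv.and hxx))
  obtain ⟨B, hB1, hB2, hB3⟩ := exists_measurable_superset_of_null (ae_iff.mp hGoodae)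
  set G := Bᶜ with hGdef
  have hGmeas : MeasurableSet G := hB2.compl
  have hGco : μ Gᶜ = 0 := by rw [hGdef, compl_compl]; exact hB3
  have hGP : ∀ t ∈ G, (∀ n, ys n t ∈ F (xs n t)) ∧
      Tendsto (fun n => xs n t) atTop (nhds (x t)) ∧ x t = xt t := by
    intro t ht
    by_contra h
    exact ht (hB1 h)
  -- distance functions
  set D : ℕ → Ω → ℝ := fun k t => ‖y t - projFn F (r k) (xt t, y t)‖ with hDdef
  have hDmeas : ∀ k, Measurable (D k) := fun k =>
    (hymeas.sub ((measurable_projFn F (r k)).comp (hxt.prodMk hymeas))).norm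
  -- main claim
  have claim : ∀ k, μ (G ∩ {t | D k t ≠ 0}) = 0 := by
    intro k
    have hsub : G ∩ {t | D k t ≠ 0} ⊆ ⋃ (a : ℕ), ⋃ (M : ℕ),
        ((G ∩ {t | 1/((a:ℝ)+1) ≤ D k t}) ∩ {t | D k t ≤ (M:ℝ)}) := by
      rintro t ⟨htG, htD⟩
      have hpos : 0 < D k t := lt_of_le_of_ne (norm_nonneg _) (Ne.symm htD)
      obtain ⟨a, ha⟩ := exists_nat_one_div_lt hpos
      obtain ⟨M, hM⟩ := exists_nat_ge (D k t)
      exact Set.mem_iUnion.mpr ⟨a, Set.mem_iUnion.mpr ⟨M, ⟨⟨htG, ha.le⟩, hM⟩⟩⟩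
    apply measure_mono_null hsub
    refine measure_iUnion_null fun a => measure_iUnion_null fun M => ?_
    set S := (G ∩ {t | 1/((a:ℝ)+1) ≤ D k t}) ∩ {t | D k t ≤ (M:ℝ)} with hSdef
    by_contra hS0
    have hSmeas : MeasurableSet S :=
      (hGmeas.inter (measurableSet_le measurable_const (hDmeas k))).inter
        (measurableSet_le (hDmeas k) measurable_const)
    have hSfin : μ S ≠ ⊤ := measure_ne_top μ S
    have hfg : ∀ᵐ t ∂μ, t ∈ S → Tendsto (fun n => xs n t) atTop (nhds (xt t)) := by
      filter_upwards [hGoodae] with t ht _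
      rw [← ht.2.2]
      exact ht.2.1
    have hεpos : 0 < (μ S).toReal / 2 := by
      have := ENNReal.toReal_pos hS0 hSfin
      linarith
    obtain ⟨T, hTS, hTmeas, hTle, hTunif⟩ := tendstoUniformlyOn_of_ae_tendsto
      (fun n => (hxsmeas n).stronglyMeasurable) hxt.stronglyMeasurable hSmeas hSfin hfg hεpos
    set E := S \ T with hEdef
    have hEmeas : MeasurableSet E := hSmeas.diff hTmeas
    have hEfin : μ E ≠ ⊤ := measure_ne_top μ E
    have hTlt : μ T < μ S := by
      have h2 : ENNReal.ofReal ((μ S).toReal / 2) = μ S / 2 := by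
        have hne : μ S / 2 ≠ ⊤ := ne_top_of_le_ne_top hSfin ENNReal.half_le_self
        rw [← ENNReal.ofReal_toReal hne, ENNReal.toReal_div]
        norm_num
      calc μ T ≤ ENNReal.ofReal ((μ S).toReal / 2) := hTle
      _ = μ S / 2 := h2
      _ < μ S := ENNReal.half_lt_self hS0 hSfin
    have hE0 : μ E ≠ 0 := by
      intro h0
      have hle : μ S ≤ μ E + μ T := by
        have : μ S = μ (E ∪ T) := by rw [hEdef, Set.diff_union_of_subset hTS]
        rw [this]
        exact measure_union_le _ _
      rw [h0, zero_add] at hle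
      exact absurd (lt_of_le_of_lt hle hTlt) (lt_irrefl _)
    set b : Ω → EuclideanSpace ℝ (Fin nn) :=
      E.indicator (fun t => y t - projFn F (r k) (xt t, y t)) with hbdef
    have hbmeas : Measurable b :=
      (hymeas.sub ((measurable_projFn F (r k)).comp (hxt.prodMk hymeas))).indicator hEmeas
    have hbbd : ∀ t, ‖b t‖ ≤ (M:ℝ) := by
      intro t
      by_cases ht : t ∈ E
      · rw [hbdef, Set.indicator_of_mem ht]
        exact ht.1.2
      · rw [hbdef, Set.indicator_of_notMem ht, norm_zero]
        positivity
    have htendI := hweak b hbmeas ⟨(M:ℝ), hbbd⟩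
    rw [Metric.tendstoUniformlyOn_iff] at hTunif
    obtain ⟨N, hN⟩ := eventually_atTop.mp (hTunif (r k) (hrpos k))
    have hkey : ∀ n ≥ N, (∫ t, (inner ℝ (ys n t) (b t) : ℝ) ∂μ) ≤
        (∫ t, (inner ℝ (y t) (b t) : ℝ) ∂μ) - (1/((a:ℝ)+1))^2 * (μ E).toReal := by
      intro n hn
      have hpt : ∀ t, (inner ℝ (ys n t) (b t) : ℝ) ≤
          (inner ℝ (y t) (b t) : ℝ) - E.indicator (fun _ => (1/((a:ℝ)+1))^2) t := by
        intro t
        by_cases ht : t ∈ E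
        · have htS : t ∈ S := ht.1
          have htG' : t ∈ G := htS.1.1
          obtain ⟨hmemt, _, _⟩ := hGP t htG'
          have hdistlt : dist (xs n t) (xt t) < r k := by
            rw [dist_comm]
            exact hN n hn t ht
          have hwmem : ys n t ∈ gSet F (r k) (xt t) := by
            apply subset_convexHull
            exact Set.mem_biUnion (Metric.mem_ball.mpr hdistlt) (hmemt n)
          have hne : (gSet F (r k) ((xt t, y t).1)).Nonempty := ⟨ys n t, hwmem⟩
          obtain ⟨hPmem, hPineq⟩ := projFn_spec hne
          have hineq := hPineq (ys n t) (subset_closure hwmem)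
          rw [hbdef, Set.indicator_of_mem ht, Set.indicator_of_mem ht]
          set P := projFn F (r k) (xt t, y t) with hPdef
          set p := y t - P with hpdef
          have f1 : (inner ℝ p (ys n t) : ℝ) - inner ℝ p P ≤ 0 := by
            rw [← inner_sub_right]
            exact hineq
          have f2 : (inner ℝ p (y t) : ℝ) - inner ℝ p P = ‖p‖^2 := by
            rw [← inner_sub_right, ← hpdef, real_inner_self_eq_norm_sq]
          have hDp : 1/((a:ℝ)+1) ≤ ‖p‖ := htS.1.2
          have hsq : (1/((a:ℝ)+1))^2 ≤ ‖p‖^2 :=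
            pow_le_pow_left₀ (by positivity) hDp 2
          have c1 : (inner ℝ (ys n t) p : ℝ) = inner ℝ p (ys n t) := real_inner_comm _ _
          have c2 : (inner ℝ (y t) p : ℝ) = inner ℝ p (y t) := real_inner_comm _ _
          rw [c1, c2]
          linarith
        · rw [hbdef, Set.indicator_of_notMem ht, Set.indicator_of_notMem ht]
          simp
      have hbm : AEStronglyMeasurable (fun t => (inner ℝ (ys n t) (b t) : ℝ)) μ :=
        ((hysmeas n).inner hbmeas).aestronglyMeasurable
      have hbm2 : AEStronglyMeasurable (fun t => (inner ℝ (y t) (b t) : ℝ)) μ :=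
        (hymeas.inner hbmeas).aestronglyMeasurable
      have hint1 : Integrable (fun t => (inner ℝ (ys n t) (b t) : ℝ)) μ := by
        apply Integrable.mono ((hysint n).norm.const_mul (M:ℝ)) hbm
        filter_upwards with t
        have h1 : |(inner ℝ (ys n t) (b t) : ℝ)| ≤ ‖ys n t‖ * ‖b t‖ := abs_real_inner_le_norm _ _
        rw [Real.norm_eq_abs]
        calc |(inner ℝ (ys n t) (b t) : ℝ)| ≤ ‖ys n t‖ * ‖b t‖ := h1
        _ ≤ ‖ys n t‖ * (M:ℝ) := mul_le_mul_of_nonneg_left (hbbd t) (norm_nonneg _)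
        _ ≤ ‖(M:ℝ) * ‖ys n t‖‖ := by
            rw [Real.norm_eq_abs, abs_of_nonneg (by positivity)]
            ring_nf
            exact le_refl _
      have hint2 : Integrable (fun t => (inner ℝ (y t) (b t) : ℝ)) μ := by
        apply Integrable.mono (hyint.norm.const_mul (M:ℝ)) hbm2
        filter_upwards with t
        have h1 : |(inner ℝ (y t) (b t) : ℝ)| ≤ ‖y t‖ * ‖b t‖ := abs_real_inner_le_norm _ _
        rw [Real.norm_eq_abs]
        calc |(inner ℝ (y t) (b t) : ℝ)| ≤ ‖y t‖ * ‖b t‖ := h1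
        _ ≤ ‖y t‖ * (M:ℝ) := mul_le_mul_of_nonneg_left (hbbd t) (norm_nonneg _)
        _ ≤ ‖(M:ℝ) * ‖y t‖‖ := by
            rw [Real.norm_eq_abs, abs_of_nonneg (by positivity)]
            ring_nf
            exact le_refl _
      have hint3 : Integrable (E.indicator fun _ => (1/((a:ℝ)+1))^2) μ :=
        (integrable_const _).indicator hEmeas
      calc (∫ t, (inner ℝ (ys n t) (b t) : ℝ) ∂μ)
          ≤ ∫ t, ((inner ℝ (y t) (b t) : ℝ) - E.indicator (fun _ => (1/((a:ℝ)+1))^2) t) ∂μ :=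
            integral_mono hint1 (hint2.sub hint3) hpt
        _ = (∫ t, (inner ℝ (y t) (b t) : ℝ) ∂μ) - ∫ t, E.indicator (fun _ => (1/((a:ℝ)+1))^2) t ∂μ :=
            integral_sub hint2 hint3
        _ = (∫ t, (inner ℝ (y t) (b t) : ℝ) ∂μ) - (1/((a:ℝ)+1))^2 * (μ E).toReal := by
            rw [integral_indicator_const _ hEmeas, smul_eq_mul, mul_comm, measureReal_def]
    have hfinal := le_of_tendsto htendI (eventually_atTop.mpr ⟨N, hkey⟩)
    have hcpos : 0 < (1/((a:ℝ)+1))^2 * (μ E).toReal :=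
      mul_pos (by positivity) (ENNReal.toReal_pos hE0 hEfin)
    linarith
  -- combine
  have hae1 : ∀ᵐ t ∂μ, t ∈ G := by
    rw [ae_iff]
    have he : {a | ¬ a ∈ G} = Gᶜ := rfl
    rw [he]; exact hGco
  have hae2 : ∀ᵐ t ∂μ, ∀ k, t ∉ G ∩ {t | D k t ≠ 0} := by
    rw [ae_all_iff]
    intro k
    rw [ae_iff]
    have he : {a : Ω | ¬ a ∉ (G ∩ {t | D k t ≠ 0})} = G ∩ {t | D k t ≠ 0} := by
      ext a; simp
    rw [he]; exact claim k
  filter_upwards [hae1, hae2] with t htG htD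
  -- pointwise conclusion
  have hDzero : ∀ k, D k t = 0 := by
    intro k
    by_contra h
    exact htD k ⟨htG, h⟩
  obtain ⟨hmemt, htendt, hxteq⟩ := hGP t htG
  have hclosure : ∀ k, y t ∈ closure (gSet F (r k) (x t)) := by
    intro k
    obtain ⟨N, hN⟩ := Metric.tendsto_atTop.mp htendt (r k) (hrpos k)
    have hmemN : ys N t ∈ gSet F (r k) (x t) := by
      apply subset_convexHull
      exact Set.mem_biUnion (Metric.mem_ball.mpr (hN N le_rfl)) (hmemt N)
    have hne : (gSet F (r k) ((xt t, y t).1)).Nonempty := by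
      show (gSet F (r k) (xt t)).Nonempty
      rw [← hxteq]
      exact ⟨ys N t, hmemN⟩
    have := (projFn_spec hne).1
    have hyeq : y t = projFn F (r k) (xt t, y t) := by
      have := hDzero k
      rw [hDdef] at this
      simpa [sub_eq_zero] using norm_eq_zero.mp this
    rw [hyeq]
    simpa [← hxteq] using this
  -- build the outer limit element
  have hz : ∀ k : ℕ, ∃ z ∈ gSet F (r k) (x t), dist (y t) z < 1 / ((k:ℝ) + 1) := by
    intro k
    exact Metric.mem_closure_iff.mp (hclosure k) _ (by positivity)
  choose z hz1 hz2 using hz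
  refine ⟨id, z, strictMono_id, fun j => hz1 j, ?_⟩
  rw [tendsto_iff_dist_tendsto_zero]
  apply squeeze_zero (fun k => dist_nonneg) (fun k => (dist_comm (z k) (y t) ▸ (hz2 k).le))
  exact tendsto_one_div_add_atTop_nhds_zero_nat
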